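/- There exist constants C > 0 and ξ₀ ≥ 1 such that for all ξ ≥ ξ₀: |∫₀^∞ f_ξ(t)·sinh(t) dt − 1| ≤ C/ξ². -/

import Mathlib

open Matrix MeasureTheory Real Filter Topology
open scoped MatrixGroups Pointwise

noncomputable section

/-- `SL(2,ℝ)` as the special linear group of 2×2 real matrices. -/
abbrev SL2R := Matrix.SpecialLinearGroup (Fin 2) ℝ

instance : TopologicalSpace SL2R :=
  show TopologicalSpace {A : Matrix (Fin 2) (Fin 2) ℝ // A.det = 1} from inferInstance

instance : MeasurableSpace SL2R := borel SL2R

/-- Squared Frobenius norm `‖g‖² = a² + b² + c² + d²`. -/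
def fnormSq (g : SL2R) : ℝ :=
  (g : Matrix (Fin 2) (Fin 2) ℝ) 0 0 ^ 2 + (g : Matrix (Fin 2) (Fin 2) ℝ) 0 1 ^ 2
    + (g : Matrix (Fin 2) (Fin 2) ℝ) 1 0 ^ 2 + (g : Matrix (Fin 2) (Fin 2) ℝ) 1 1 ^ 2

/-- Frobenius norm `‖g‖`. -/
def fnorm (g : SL2R) : ℝ := Real.sqrt (fnormSq g)

/-- The angle `θ_g = arg((g·i − i)/(g·i + i)) ∈ (−π, π]`; equals `0` when `g·i = i`. -/
def theta (g : SL2R) : ℝ :=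
  Complex.arg ((((g • UpperHalfPlane.I : UpperHalfPlane) : ℂ) - Complex.I)
    / (((g • UpperHalfPlane.I : UpperHalfPlane) : ℂ) + Complex.I))

/-- Distance between two angles: the distance from `a − b` to the nearest element of `2πℤ`. -/
def angDist (a b : ℝ) : ℝ := |((a - b : ℝ) : Real.Angle).toReal|

/-- Inverse hyperbolic cosine. -/
def arccosh (x : ℝ) : ℝ := Real.log (x + Real.sqrt (x ^ 2 - 1))

/-- `ℓ(M) = arccosh(‖M‖²/2)`, the hyperbolic distance from `i` to `M·i`. -/
def ell (M : SL2R) : ℝ := arccosh (fnormSq M / 2)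

/-- The pair-correlation density building block `f_ξ(ℓ)`. -/
def fxi (ξ l : ℝ) : ℝ :=
  if Real.sinh l ≤ ξ then 2 / ξ ^ 2 * l
  else if 2 * Real.sinh (l / 2) ≤ ξ then
    2 / ξ ^ 2 * (l + Real.log (1 + ξ ^ 2)
      - 2 * Real.log (Real.cosh l + Real.sqrt (Real.sinh l ^ 2 - ξ ^ 2)))
  else 2 / ξ ^ 2 * (l - Real.log (Real.cosh l + Real.sqrt (Real.sinh l ^ 2 - ξ ^ 2)))

/-- The rotation matrix `k_φ ∈ SL(2,ℝ)`. -/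
def kMat (φ : ℝ) : SL2R :=
  ⟨!![Real.cos (φ / 2), Real.sin (φ / 2); -Real.sin (φ / 2), Real.cos (φ / 2)], by
    rw [Matrix.det_fin_two_of]
    linear_combination Real.sin_sq_add_cos_sq (φ / 2)⟩

/-- The diagonal matrix `a_t ∈ SL(2,ℝ)`. -/
def aMat (t : ℝ) : SL2R :=
  ⟨!![Real.exp (t / 2), 0; 0, Real.exp (-t / 2)], by
    rw [Matrix.det_fin_two_of, ← Real.exp_add]
    norm_num
    ring⟩

namespace FxiAux

noncomputable def Rr (ξ t : ℝ) : ℝ := Real.sqrt (Real.sinh t ^ 2 - ξ ^ 2)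
noncomputable def Gg (ξ t : ℝ) : ℝ := Real.log (Real.cosh t + Rr ξ t)
noncomputable def F1 (t : ℝ) : ℝ := t * Real.cosh t - Real.sinh t
noncomputable def F2 (ξ t : ℝ) : ℝ :=
  F1 t + Real.log (1 + ξ ^ 2) * Real.cosh t - 2 * (Gg ξ t * Real.cosh t - Rr ξ t)
noncomputable def F3 (ξ t : ℝ) : ℝ := F1 t - (Gg ξ t * Real.cosh t - Rr ξ t)

lemma Rr_nonneg (ξ t : ℝ) : 0 ≤ Rr ξ t := Real.sqrt_nonneg _

lemma base_pos (ξ t : ℝ) : 0 < Real.cosh t + Rr ξ t :=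
  lt_of_lt_of_le (Real.cosh_pos t) (le_add_of_nonneg_right (Rr_nonneg ξ t))

lemma continuous_Rr (ξ : ℝ) : Continuous (Rr ξ) :=
  Real.continuous_sqrt.comp ((Real.continuous_sinh.pow 2).sub continuous_const)

lemma continuous_Gg (ξ : ℝ) : Continuous (Gg ξ) :=
  (Real.continuous_cosh.add (continuous_Rr ξ)).log fun t => (base_pos ξ t).ne'

lemma continuous_F1 : Continuous F1 :=
  (continuous_id.mul Real.continuous_cosh).sub Real.continuous_sinh

lemma continuous_F2 (ξ : ℝ) : Continuous (F2 ξ) :=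
  (continuous_F1.add (continuous_const.mul Real.continuous_cosh)).sub
    (continuous_const.mul (((continuous_Gg ξ).mul Real.continuous_cosh).sub (continuous_Rr ξ)))

lemma continuous_F3 (ξ : ℝ) : Continuous (F3 ξ) :=
  continuous_F1.sub (((continuous_Gg ξ).mul Real.continuous_cosh).sub (continuous_Rr ξ))

lemma hasDerivAt_F1 (t : ℝ) : HasDerivAt F1 (t * Real.sinh t) t := by
  have h := ((hasDerivAt_id t).mul (Real.hasDerivAt_cosh t)).sub (Real.hasDerivAt_sinh t)
  refine h.congr_deriv ?_
  simp only [id_eq]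
  ring

lemma Rr_pos {ξ t : ℝ} (h : 0 < Real.sinh t ^ 2 - ξ ^ 2) : 0 < Rr ξ t := Real.sqrt_pos.mpr h

lemma Rr_sq {ξ t : ℝ} (h : 0 < Real.sinh t ^ 2 - ξ ^ 2) :
    Rr ξ t ^ 2 = Real.sinh t ^ 2 - ξ ^ 2 := Real.sq_sqrt h.le

lemma hasDerivAt_Rr {ξ t : ℝ} (h : 0 < Real.sinh t ^ 2 - ξ ^ 2) :
    HasDerivAt (Rr ξ) (Real.sinh t * Real.cosh t / Rr ξ t) t := by
  have hin : HasDerivAt (fun s => Real.sinh s ^ 2 - ξ ^ 2)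
      (2 * Real.sinh t ^ 1 * Real.cosh t) t :=
    ((Real.hasDerivAt_sinh t).pow 2).sub_const _
  have h0 : Real.sinh t ^ 2 - ξ ^ 2 ≠ 0 := h.ne'
  have := (Real.hasDerivAt_sqrt h0).comp t hin
  refine this.congr_deriv ?_
  rw [Rr]
  field_simp

lemma hasDerivAt_Gg {ξ t : ℝ} (h : 0 < Real.sinh t ^ 2 - ξ ^ 2) :
    HasDerivAt (Gg ξ) (Real.sinh t / Rr ξ t) t := by
  have hin : HasDerivAt (fun s => Real.cosh s + Rr ξ s)
      (Real.sinh t + Real.sinh t * Real.cosh t / Rr ξ t) t :=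
    (Real.hasDerivAt_cosh t).add (hasDerivAt_Rr h)
  have := (Real.hasDerivAt_log (base_pos ξ t).ne').comp t hin
  refine this.congr_deriv ?_
  have hR := (Rr_pos h).ne'
  have hB := (base_pos ξ t).ne'
  field_simp
  ring

lemma hasDerivAt_GR {ξ t : ℝ} (h : 0 < Real.sinh t ^ 2 - ξ ^ 2) :
    HasDerivAt (fun s => Gg ξ s * Real.cosh s - Rr ξ s) (Gg ξ t * Real.sinh t) t := by
  have hd := ((hasDerivAt_Gg h).mul (Real.hasDerivAt_cosh t)).sub (hasDerivAt_Rr h)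
  refine hd.congr_deriv ?_
  have hR := (Rr_pos h).ne'
  field_simp
  ring

lemma hasDerivAt_F2 {ξ t : ℝ} (h : 0 < Real.sinh t ^ 2 - ξ ^ 2) :
    HasDerivAt (F2 ξ) ((t + Real.log (1 + ξ ^ 2) - 2 * Gg ξ t) * Real.sinh t) t := by
  have hd := ((hasDerivAt_F1 t).add ((Real.hasDerivAt_cosh t).const_mul
      (Real.log (1 + ξ ^ 2)))).sub ((hasDerivAt_GR h).const_mul 2)
  refine hd.congr_deriv ?_
  ring

lemma hasDerivAt_F3 {ξ t : ℝ} (h : 0 < Real.sinh t ^ 2 - ξ ^ 2) :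
    HasDerivAt (F3 ξ) ((t - Gg ξ t) * Real.sinh t) t := by
  have hd := (hasDerivAt_F1 t).sub (hasDerivAt_GR h)
  refine hd.congr_deriv ?_
  ring

lemma Gg_le {ξ t : ℝ} (ht : 0 ≤ t) : Gg ξ t ≤ t := by
  have hs : 0 ≤ Real.sinh t := by
    rw [← Real.sinh_zero]
    exact Real.sinh_le_sinh.mpr ht
  have hRle : Rr ξ t ≤ Real.sinh t := by
    rw [Rr]
    calc Real.sqrt (Real.sinh t ^ 2 - ξ ^ 2) ≤ Real.sqrt (Real.sinh t ^ 2) :=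
          Real.sqrt_le_sqrt (by nlinarith)
      _ = Real.sinh t := Real.sqrt_sq hs
  have hle : Real.cosh t + Rr ξ t ≤ Real.exp t := by
    rw [← Real.cosh_add_sinh]
    linarith
  calc Gg ξ t ≤ Real.log (Real.exp t) :=
        (Real.log_le_log_iff (base_pos ξ t) (Real.exp_pos t)).mpr hle
    _ = t := Real.log_exp t

lemma F3_bound {ξ t : ℝ} (hξ : 0 < ξ) (ht : 0 < t) (hxt : ξ < Real.sinh t) :
    |F3 ξ t| ≤ ξ ^ 2 / Real.sinh t := by
  have hS : 0 < Real.sinh t := hξ.trans hxt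
  have hp : 0 < Real.sinh t ^ 2 - ξ ^ 2 := by nlinarith
  have hR2 := Rr_sq hp
  have hR0 := Rr_nonneg ξ t
  have hRS : Rr ξ t ≤ Real.sinh t := by nlinarith
  have hC := Real.cosh_pos t
  have hCR := base_pos ξ t
  have hG : Gg ξ t ≤ t := Gg_le ht.le
  have h1b : Real.sinh t - Rr ξ t ≤ ξ ^ 2 / Real.sinh t := by
    rw [le_div_iff₀ hS]
    nlinarith
  have hlog : t - Gg ξ t ≤ (Real.sinh t - Rr ξ t) / (Real.cosh t + Rr ξ t) := by
    have e1 : t - Gg ξ t = Real.log (Real.exp t / (Real.cosh t + Rr ξ t)) := by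
      rw [Real.log_div (Real.exp_ne_zero t) hCR.ne', Real.log_exp, Gg]
    have e2 := Real.log_le_sub_one_of_pos (div_pos (Real.exp_pos t) hCR)
    have e3 : Real.exp t / (Real.cosh t + Rr ξ t) - 1
        = (Real.sinh t - Rr ξ t) / (Real.cosh t + Rr ξ t) := by
      have hex : Real.exp t = Real.cosh t + Real.sinh t := (Real.cosh_add_sinh t).symm
      field_simp
      linarith [hex]
    rw [e1]
    linarith
  have h2b : (t - Gg ξ t) * Real.cosh t ≤ ξ ^ 2 / Real.sinh t := by
    have hm : (t - Gg ξ t) * Real.cosh t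
        ≤ (Real.sinh t - Rr ξ t) / (Real.cosh t + Rr ξ t) * Real.cosh t :=
      mul_le_mul_of_nonneg_right hlog hC.le
    have h4 : (Real.sinh t - Rr ξ t) / (Real.cosh t + Rr ξ t) * Real.cosh t
        ≤ Real.sinh t - Rr ξ t := by
      rw [div_mul_eq_mul_div, div_le_iff₀ hCR]
      nlinarith
    linarith
  have h2a : 0 ≤ (t - Gg ξ t) * Real.cosh t := mul_nonneg (by linarith) hC.le
  have hval : F3 ξ t = (t - Gg ξ t) * Real.cosh t - (Real.sinh t - Rr ξ t) := by
    rw [F3, F1]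
    ring
  rw [hval]
  exact abs_le.mpr ⟨by linarith, by linarith⟩

lemma integral_eq_one {ξ : ℝ} (hξ : 1 ≤ ξ) :
    ∫ t in Set.Ioi (0:ℝ), fxi ξ t * Real.sinh t = 1 := by
  have hξ0 : (0:ℝ) < ξ := lt_of_lt_of_le one_pos hξ
  have hξ2 : (0:ℝ) < ξ ^ 2 := by positivity
  set t1 := Real.arsinh ξ with ht1def
  set t2 := 2 * Real.arsinh (ξ / 2) with ht2def
  have hsinh_t1 : Real.sinh t1 = ξ := Real.sinh_arsinh ξ
  have hcosh_t1 : Real.cosh t1 = Real.sqrt (1 + ξ ^ 2) := Real.cosh_arsinh ξ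
  have ht1pos : 0 < t1 := Real.arsinh_pos_iff.mpr hξ0
  have hhalf : t2 / 2 = Real.arsinh (ξ / 2) := by rw [ht2def]; ring
  have hsinh_half : Real.sinh (t2 / 2) = ξ / 2 := by rw [hhalf, Real.sinh_arsinh]
  have hcosh_half_sq : Real.cosh (t2 / 2) ^ 2 = 1 + ξ ^ 2 / 4 := by
    rw [hhalf, Real.cosh_arsinh, Real.sq_sqrt (by positivity)]
    ring
  have ht2eq : t2 = 2 * (t2 / 2) := by ring
  have hcosh_t2 : Real.cosh t2 = 1 + ξ ^ 2 / 2 := by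
    conv_lhs => rw [ht2eq]
    rw [Real.cosh_two_mul, hcosh_half_sq, hsinh_half]
    ring
  have hsinh_t2 : Real.sinh t2 = ξ * Real.cosh (t2 / 2) := by
    conv_lhs => rw [ht2eq]
    rw [Real.sinh_two_mul, hsinh_half]
    ring
  have hcosh_half_gt : 1 < Real.cosh (t2 / 2) := by
    nlinarith [Real.cosh_pos (t2 / 2)]
  have hxi_lt_sinh_t2 : ξ < Real.sinh t2 := by
    rw [hsinh_t2]
    nlinarith
  have ht12 : t1 < t2 := by
    rw [← Real.sinh_lt_sinh, hsinh_t1]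
    exact hxi_lt_sinh_t2
  have ht2pos : 0 < t2 := ht1pos.trans ht12
  have hsinh_t2_sq : Real.sinh t2 ^ 2 = ξ ^ 2 + ξ ^ 4 / 4 := by
    rw [Real.sinh_sq, hcosh_t2]
    ring
  have hR_t1 : Rr ξ t1 = 0 := by
    rw [Rr, hsinh_t1, sub_self, Real.sqrt_zero]
  have hG_t1 : Gg ξ t1 = Real.log (1 + ξ ^ 2) / 2 := by
    rw [Gg, hR_t1, add_zero, hcosh_t1, Real.log_sqrt (by positivity)]
  have hR_t2 : Rr ξ t2 = ξ ^ 2 / 2 := by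
    rw [Rr, hsinh_t2_sq, show ξ ^ 2 + ξ ^ 4 / 4 - ξ ^ 2 = (ξ ^ 2 / 2) ^ 2 by ring,
      Real.sqrt_sq (by positivity)]
  have hG_t2 : Gg ξ t2 = Real.log (1 + ξ ^ 2) := by
    rw [Gg, hR_t2, hcosh_t2, show 1 + ξ ^ 2 / 2 + ξ ^ 2 / 2 = 1 + ξ ^ 2 by ring]
  have hpos : ∀ t, t1 < t → 0 < Real.sinh t ^ 2 - ξ ^ 2 := by
    intro t ht
    have h1 : ξ < Real.sinh t := by
      rw [← hsinh_t1]
      exact Real.sinh_lt_sinh.mpr ht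
    nlinarith
  -- branch identification
  have hfxi1 : Set.EqOn (fun t => fxi ξ t * Real.sinh t)
      (fun t => 2 / ξ ^ 2 * t * Real.sinh t) (Set.Ioc 0 t1) := by
    intro t ht
    have h1 : Real.sinh t ≤ ξ := by
      rw [← hsinh_t1]
      exact Real.sinh_le_sinh.mpr ht.2
    simp only [fxi, if_pos h1]
  have hfxi2 : Set.EqOn (fun t => fxi ξ t * Real.sinh t)
      (fun t => 2 / ξ ^ 2 * ((t + Real.log (1 + ξ ^ 2) - 2 * Gg ξ t) * Real.sinh t))
      (Set.Ioc t1 t2) := by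
    intro t ht
    have h1 : ¬ Real.sinh t ≤ ξ := by
      rw [not_le, ← hsinh_t1]
      exact Real.sinh_lt_sinh.mpr ht.1
    have h2 : 2 * Real.sinh (t / 2) ≤ ξ := by
      have h := Real.sinh_le_sinh.mpr (show t / 2 ≤ t2 / 2 by linarith [ht.2])
      rw [hsinh_half] at h
      linarith
    simp only [fxi, if_neg h1, if_pos h2, Gg, Rr]
    ring
  have hfxi3 : Set.EqOn (fun t => fxi ξ t * Real.sinh t)
      (fun t => 2 / ξ ^ 2 * ((t - Gg ξ t) * Real.sinh t)) (Set.Ioi t2) := by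
    intro t ht
    have ht' : t2 < t := ht
    have h1 : ¬ Real.sinh t ≤ ξ := by
      rw [not_le, ← hsinh_t1]
      exact Real.sinh_lt_sinh.mpr (ht12.trans ht')
    have h2 : ¬ 2 * Real.sinh (t / 2) ≤ ξ := by
      rw [not_le]
      have h := Real.sinh_lt_sinh.mpr (show t2 / 2 < t / 2 by linarith)
      rw [hsinh_half] at h
      linarith
    simp only [fxi, if_neg h1, if_neg h2, Gg, Rr]
    ring
  -- piece 1
  have hI1 : ∫ t in Set.Ioc (0:ℝ) t1, fxi ξ t * Real.sinh t = 2 / ξ ^ 2 * F1 t1 := by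
    rw [MeasureTheory.setIntegral_congr_fun measurableSet_Ioc hfxi1,
      ← intervalIntegral.integral_of_le ht1pos.le]
    have hd : ∀ x ∈ Set.uIcc (0:ℝ) t1, HasDerivAt (fun s => 2 / ξ ^ 2 * F1 s)
        (2 / ξ ^ 2 * x * Real.sinh x) x := by
      intro x _
      have h := (hasDerivAt_F1 x).const_mul (2 / ξ ^ 2)
      refine h.congr_deriv ?_
      ring
    rw [intervalIntegral.integral_eq_sub_of_hasDerivAt hd
      (((continuous_const.mul continuous_id).mul Real.continuous_sinh).intervalIntegrable 0 t1)]
    simp [F1]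
  -- piece 2
  have hI2 : ∫ t in Set.Ioc t1 t2, fxi ξ t * Real.sinh t
      = 2 / ξ ^ 2 * F2 ξ t2 - 2 / ξ ^ 2 * F2 ξ t1 := by
    rw [MeasureTheory.setIntegral_congr_fun measurableSet_Ioc hfxi2,
      ← intervalIntegral.integral_of_le ht12.le]
    refine intervalIntegral.integral_eq_sub_of_hasDeriv_right_of_le ht12.le
      (continuous_const.mul (continuous_F2 ξ)).continuousOn ?_ ?_
    · intro x hx
      exact (((hasDerivAt_F2 (hpos x hx.1)).const_mul (2 / ξ ^ 2))).hasDerivWithinAt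
    · exact (continuous_const.mul (((continuous_id.add continuous_const).sub
        (continuous_const.mul (continuous_Gg ξ))).mul Real.continuous_sinh)).intervalIntegrable _ _
  -- piece 3 ingredients
  have hderiv3 : ∀ x ∈ Set.Ioi t2, HasDerivAt (fun s => 2 / ξ ^ 2 * F3 ξ s)
      (2 / ξ ^ 2 * ((x - Gg ξ x) * Real.sinh x)) x := fun x hx =>
    ((hasDerivAt_F3 (hpos x (ht12.trans hx))).const_mul (2 / ξ ^ 2))
  have hnonneg3 : ∀ x ∈ Set.Ioi t2, 0 ≤ 2 / ξ ^ 2 * ((x - Gg ξ x) * Real.sinh x) := by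
    intro x hx
    have hx0 : 0 < x := ht2pos.trans hx
    have hG := Gg_le (ξ := ξ) hx0.le
    have hs : 0 ≤ Real.sinh x := by
      rw [← Real.sinh_zero]
      exact Real.sinh_le_sinh.mpr hx0.le
    have : 0 ≤ (x - Gg ξ x) * Real.sinh x := mul_nonneg (by linarith) hs
    positivity
  have hsinh_atTop : Tendsto Real.sinh atTop atTop := by
    apply tendsto_atTop_mono' atTop _ tendsto_id
    filter_upwards [eventually_ge_atTop (0:ℝ)] with x hx
    exact Real.self_le_sinh_iff.mpr hx
  have hF3tend : Tendsto (fun t => 2 / ξ ^ 2 * F3 ξ t) atTop (𝓝 0) := by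
    apply squeeze_zero_norm' _ (tendsto_const_nhds.div_atTop hsinh_atTop (f := fun _ => (4:ℝ)))
    filter_upwards [eventually_gt_atTop t2] with t ht
    have hxt : ξ < Real.sinh t := by
      rw [← hsinh_t1]
      exact Real.sinh_lt_sinh.mpr (ht12.trans ht)
    have hS : 0 < Real.sinh t := hξ0.trans hxt
    have hb := F3_bound hξ0 (ht2pos.trans ht) hxt
    rw [Real.norm_eq_abs, abs_mul, abs_of_nonneg (by positivity : (0:ℝ) ≤ 2 / ξ ^ 2)]
    calc 2 / ξ ^ 2 * |F3 ξ t| ≤ 2 / ξ ^ 2 * (ξ ^ 2 / Real.sinh t) :=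
          mul_le_mul_of_nonneg_left hb (by positivity)
      _ = 2 / Real.sinh t := by field_simp
      _ ≤ 4 / Real.sinh t := (div_le_div_iff_of_pos_right hS).mpr (by norm_num)
  have hcont3 : ContinuousWithinAt (fun s => 2 / ξ ^ 2 * F3 ξ s) (Set.Ici t2) t2 :=
    (continuous_const.mul (continuous_F3 ξ)).continuousWithinAt
  have hI3 : ∫ t in Set.Ioi t2, fxi ξ t * Real.sinh t = 0 - 2 / ξ ^ 2 * F3 ξ t2 := by
    rw [MeasureTheory.setIntegral_congr_fun measurableSet_Ioi hfxi3]
    exact MeasureTheory.integral_Ioi_of_hasDerivAt_of_nonneg hcont3 hderiv3 hnonneg3 hF3tend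
  -- integrability
  have hint1 : IntegrableOn (fun t => fxi ξ t * Real.sinh t) (Set.Ioc 0 t1) :=
    (((continuous_const.mul continuous_id).mul
      Real.continuous_sinh).integrableOn_Ioc).congr_fun hfxi1.symm measurableSet_Ioc
  have hint2 : IntegrableOn (fun t => fxi ξ t * Real.sinh t) (Set.Ioc t1 t2) :=
    ((continuous_const.mul (((continuous_id.add continuous_const).sub
      (continuous_const.mul (continuous_Gg ξ))).mul
      Real.continuous_sinh)).integrableOn_Ioc).congr_fun hfxi2.symm measurableSet_Ioc
  have hint3 : IntegrableOn (fun t => fxi ξ t * Real.sinh t) (Set.Ioi t2) :=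
    (MeasureTheory.integrableOn_Ioi_deriv_of_nonneg hcont3 hderiv3 hnonneg3
      hF3tend).congr_fun hfxi3.symm measurableSet_Ioi
  have hint12 : IntegrableOn (fun t => fxi ξ t * Real.sinh t) (Set.Ioc 0 t2) := by
    rw [← Set.Ioc_union_Ioc_eq_Ioc ht1pos.le ht12.le]
    exact hint1.union hint2
  -- splitting
  have hsplitB : ∫ t in Set.Ioi (0:ℝ), fxi ξ t * Real.sinh t
      = (∫ t in Set.Ioc (0:ℝ) t2, fxi ξ t * Real.sinh t)
        + ∫ t in Set.Ioi t2, fxi ξ t * Real.sinh t := by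
    rw [← MeasureTheory.setIntegral_union Set.Ioc_disjoint_Ioi_same measurableSet_Ioi
      hint12 hint3, Set.Ioc_union_Ioi_eq_Ioi ht2pos.le]
  have hsplitA : ∫ t in Set.Ioc (0:ℝ) t2, fxi ξ t * Real.sinh t
      = (∫ t in Set.Ioc (0:ℝ) t1, fxi ξ t * Real.sinh t)
        + ∫ t in Set.Ioc t1 t2, fxi ξ t * Real.sinh t := by
    rw [← MeasureTheory.setIntegral_union (Set.Ioc_disjoint_Ioc_of_le le_rfl) measurableSet_Ioc
      hint1 hint2, Set.Ioc_union_Ioc_eq_Ioc ht1pos.le ht12.le]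
  rw [hsplitB, hsplitA, hI1, hI2, hI3]
  simp only [F2, F3]
  rw [hG_t1, hR_t1, hG_t2, hR_t2, hcosh_t2]
  have hne : ξ ≠ 0 := hξ0.ne'
  field_simp
  ring

end FxiAux

/-- Lemma 2.8, (2.17): `∫₀^∞ f_ξ(t) sinh t dt = 1 + O(1/ξ²)`. -/
theorem fxi_integral_asymptotic :
    ∃ C > (0:ℝ), ∃ ξ₀ : ℝ, 1 ≤ ξ₀ ∧ ∀ ξ : ℝ, ξ₀ ≤ ξ →
      |(∫ t in Set.Ioi (0:ℝ), fxi ξ t * Real.sinh t) - 1| ≤ C / ξ ^ 2 := by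
  refine ⟨1, one_pos, 1, le_refl 1, fun ξ hξ => ?_⟩
  rw [FxiAux.integral_eq_one hξ]
  simp only [sub_self, abs_zero]
  positivity
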